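/- Let λ > 0 and -1 < w < 1 be real constants and consider the quintessence system x' = -(3/2)[2x + (w-1)x³ + x(w+1)(y²-1) - √(2/3)λy²], y' = -(3/2)y[(w-1)x² + (w+1)(y²-1) + √(2/3)λx]. Then: (i) the zeros of the vector field with y = 0 are exactly the three points O=(0,0), A₊=(1,0) and A₋=(-1,0); (ii) the zeros with y > 0 are exactly the point B = (√(3/2)(1+w)/λ, √(3(1-w²))/(√2 λ)), together with (when λ² < 6) the point C = (λ/√6, √(1-λ²/6)); B and C coincide precisely when λ² = 3(1+w). Moreover at B one has Ω_φ = 3(1+w)/λ², w_φ = w and w_eff = w (a scaling solution), while at C one has Ω_φ = 1 and w_eff = λ²/3 - 1. -/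

import Mathlib

/-- `x`-component of the quintessence (exponential potential) vector field. -/
noncomputable def q4x (w lam x y : ℝ) : ℝ :=
  -(3 / 2) * (2 * x + (w - 1) * x ^ 3 + x * (w + 1) * (y ^ 2 - 1)
    - Real.sqrt (2 / 3) * lam * y ^ 2)

/-- `y`-component of the quintessence (exponential potential) vector field. -/
noncomputable def q4y (w lam x y : ℝ) : ℝ :=
  -(3 / 2) * y * ((w - 1) * x ^ 2 + (w + 1) * (y ^ 2 - 1) + Real.sqrt (2 / 3) * lam * x)

/-- The scaling critical point `B`. -/
noncomputable def B4 (w lam : ℝ) : ℝ × ℝ :=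
  (Real.sqrt (3 / 2) * (1 + w) / lam, Real.sqrt (3 * (1 - w ^ 2)) / (Real.sqrt 2 * lam))

/-- The scalar-field dominated critical point `C`. -/
noncomputable def C4 (lam : ℝ) : ℝ × ℝ := (lam / Real.sqrt 6, Real.sqrt (1 - lam ^ 2 / 6))

lemma quint_sqinj {a b : ℝ} (ha : 0 ≤ a) (hb : 0 ≤ b) (h : a ^ 2 = b ^ 2) : a = b := by
  rw [← Real.sqrt_sq ha, ← Real.sqrt_sq hb, h]

lemma quint_hst : Real.sqrt (2/3) * Real.sqrt (3/2) = 1 := by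
  rw [← Real.sqrt_mul (by norm_num)]
  norm_num

lemma quint_hs_t : Real.sqrt (2/3) = 2/3 * Real.sqrt (3/2) := by
  have ht2 : Real.sqrt (3/2) ^ 2 = 3/2 := Real.sq_sqrt (by norm_num)
  linear_combination (2/3) * Real.sqrt (3/2) * quint_hst - (2/3) * Real.sqrt (2/3) * ht2

lemma quint_hsu : Real.sqrt (2/3) * Real.sqrt 6 = 2 := by
  rw [← Real.sqrt_mul (by norm_num)]
  rw [show (2/3 : ℝ) * 6 = 2^2 by norm_num, Real.sqrt_sq (by norm_num)]

lemma quint_hs_u : Real.sqrt (2/3) = Real.sqrt 6 / 3 := by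
  have hu2 : Real.sqrt 6 ^ 2 = 6 := Real.sq_sqrt (by norm_num)
  have hu0 : Real.sqrt 6 ≠ 0 := by positivity
  rw [eq_div_iff (by norm_num)]
  refine mul_left_cancel₀ hu0 ?_
  linear_combination 3 * quint_hsu - hu2

lemma quint_htu : Real.sqrt (3/2) * Real.sqrt 6 = 3 := by
  rw [← Real.sqrt_mul (by norm_num)]
  rw [show (3/2 : ℝ) * 6 = 3^2 by norm_num, Real.sqrt_sq (by norm_num)]

/-- value of `yB²`. -/
lemma quint_yB_sq (w lam : ℝ) (hlam : lam ≠ 0) (hw1 : -1 < w) (hw2 : w < 1) :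
    (Real.sqrt (3 * (1 - w ^ 2)) / (Real.sqrt 2 * lam)) ^ 2 = 3 * (1 - w^2) / (2 * lam^2) := by
  rw [div_pow, mul_pow, Real.sq_sqrt (by nlinarith), Real.sq_sqrt (by norm_num : (0:ℝ) ≤ 2)]

/-- `q4x` vanishes at `B`. -/
lemma quint_q4x_B (w lam : ℝ) (hlam : lam ≠ 0) (hw1 : -1 < w) (hw2 : w < 1) :
    q4x w lam (B4 w lam).1 (B4 w lam).2 = 0 := by
  have ht2 : Real.sqrt (3/2) ^ 2 = 3/2 := Real.sq_sqrt (by norm_num)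
  simp only [q4x, B4]
  rw [quint_yB_sq w lam hlam hw1 hw2, quint_hs_t]
  set t := Real.sqrt (3/2)
  field_simp
  linear_combination (t*(6+12*w-12*w^3-6*w^4))*ht2

/-- `q4y` vanishes at `B`. -/
lemma quint_q4y_B (w lam : ℝ) (hlam : lam ≠ 0) (hw1 : -1 < w) (hw2 : w < 1) :
    q4y w lam (B4 w lam).1 (B4 w lam).2 = 0 := by
  have ht2 : Real.sqrt (3/2) ^ 2 = 3/2 := Real.sq_sqrt (by norm_num)
  simp only [q4y, B4]
  rw [quint_yB_sq w lam hlam hw1 hw2, quint_hs_t]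
  set t := Real.sqrt (3/2)
  have h9 : (w-1)*(t*(1+w)/lam)^2 + (w+1)*((3*(1-w^2)/(2*lam^2))-1)
      + (2/3*t)*lam*(t*(1+w)/lam) = 0 := by
    field_simp
    linear_combination (-6*w+4*w*lam^2+6*w^2+6*w^3-6+4*lam^2)*ht2
  linear_combination (-(3/2) * (Real.sqrt (3 * (1 - w ^ 2)) / (Real.sqrt 2 * lam))) * h9

/-- `q4x` vanishes at `C`. -/
lemma quint_q4x_C (w lam : ℝ) (hlam : lam ≠ 0) (hle : lam ^ 2 ≤ 6) :
    q4x w lam (C4 lam).1 (C4 lam).2 = 0 := by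
  have hu2 : Real.sqrt 6 ^ 2 = 6 := Real.sq_sqrt (by norm_num)
  have hu0 : Real.sqrt 6 ≠ 0 := by positivity
  simp only [q4x, C4]
  rw [Real.sq_sqrt (by linarith : (0:ℝ) ≤ 1 - lam^2/6), quint_hs_u]
  set u := Real.sqrt 6
  field_simp
  linear_combination ((216*lam*(u^2+6) - 36*lam*(u^4+6*u^2+36) - 108*lam^3 + 108*w*lam^3
    - 18*lam^3*(u^2+6) - 18*w*lam^3*(u^2+6) + 6*lam^3*(u^4+6*u^2+36))*3
    + lam*(108*u^4+6*u^2) + lam^3*(-18*u^4 + (54*w-55)*u^2 + 3*w-3))*hu2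

/-- `q4y` vanishes at `C`. -/
lemma quint_q4y_C (w lam : ℝ) (hlam : lam ≠ 0) (hle : lam ^ 2 ≤ 6) :
    q4y w lam (C4 lam).1 (C4 lam).2 = 0 := by
  have hu2 : Real.sqrt 6 ^ 2 = 6 := Real.sq_sqrt (by norm_num)
  have hu0 : Real.sqrt 6 ≠ 0 := by positivity
  simp only [q4y, C4]
  rw [Real.sq_sqrt (by linarith : (0:ℝ) ≤ 1 - lam^2/6), quint_hs_u]
  set u := Real.sqrt 6
  have h9 : (w-1)*(lam/u)^2 + (w+1)*((1-lam^2/6)-1) + (u/3)*lam*(lam/u) = 0 := by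
    field_simp
    linear_combination (3*lam^2*(1-w))*hu2
  linear_combination (-(3/2) * Real.sqrt (1 - lam^2/6)) * h9

/-- characterization of positive-`y` critical points. -/
lemma quint_char (w lam : ℝ) (hlam : 0 < lam) (hw1 : -1 < w) (hw2 : w < 1)
    (x y : ℝ) (hy : 0 < y) :
    (q4x w lam x y = 0 ∧ q4y w lam x y = 0) ↔
      ((x, y) = B4 w lam ∨ ((x, y) = C4 lam ∧ lam ^ 2 < 6)) := by
  have hs2 : Real.sqrt (2/3) ^ 2 = 2/3 := Real.sq_sqrt (by norm_num)
  have ht2 : Real.sqrt (3/2) ^ 2 = 3/2 := Real.sq_sqrt (by norm_num)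
  have hu2 : Real.sqrt 6 ^ 2 = 6 := Real.sq_sqrt (by norm_num)
  have hu0 : Real.sqrt 6 ≠ 0 := by positivity
  constructor
  · rintro ⟨h1, h2⟩
    have hst : Real.sqrt (2/3) * Real.sqrt (3/2) = 1 := quint_hst
    set s := Real.sqrt (2/3) with hsdef
    have e2 : (w-1)*x^2 + (w+1)*(y^2-1) + s*lam*x = 0 := by
      have h := h2
      simp only [q4y] at h
      rcases mul_eq_zero.mp h with h | h
      · exact absurd h (mul_ne_zero (by norm_num) hy.ne')
      · exact h
    have e1 : 2*x + (w-1)*x^3 + x*(w+1)*(y^2-1) - s*lam*y^2 = 0 := by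
      have h := h1
      simp only [q4x] at h
      rcases mul_eq_zero.mp h with h | h
      · norm_num at h
      · exact h
    have key : (s*lam*x - (1+w)) * (2*x - s*lam) = 0 := by
      linear_combination ((w+1)*x - s*lam) * e2 - (w+1) * e1
    have e3 : s*lam*y^2 = 2*x - s*lam*x^2 := by
      linear_combination x*e2 - e1
    rcases mul_eq_zero.mp key with hB | hC
    · left
      have hx : x = Real.sqrt (3/2)*(1+w)/lam := by
        rw [eq_div_iff hlam.ne']
        linear_combination Real.sqrt (3/2)*hB - lam*x*hst
      have hy2 : y^2 = 3*(1-w^2)/(2*lam^2) := by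
        rw [eq_div_iff (by positivity)]
        linear_combination 3*s*lam*e3 + (6-3*(s*lam*x+1+w))*hB - 3*lam^2*y^2*hs2
      have hyeq : y = Real.sqrt (3 * (1 - w ^ 2)) / (Real.sqrt 2 * lam) := by
        refine quint_sqinj hy.le (by positivity) ?_
        rw [hy2, quint_yB_sq w lam hlam.ne' hw1 hw2]
      exact Prod.ext_iff.mpr ⟨hx, hyeq⟩
    · right
      have hx : x = lam / Real.sqrt 6 := by
        rw [eq_div_iff hu0]
        have hsu : s * Real.sqrt 6 = 2 := quint_hsu
        linear_combination (Real.sqrt 6/2)*hC + (lam/2)*hsu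
      have hs0 : s ≠ 0 := by
        rw [hsdef]; positivity
      have hy2 : y^2 = 1 - lam^2/6 := by
        have h : s*lam*(y^2) = s*lam*(1 - lam^2/6) := by
          linear_combination e3 + (1 - (s*lam/2)*(x + s*lam/2))*hC - (s*lam^3/4)*hs2
        exact mul_left_cancel₀ (mul_ne_zero hs0 hlam.ne') h
      have hlt : lam^2 < 6 := by nlinarith [pow_pos hy 2]
      have hyeq : y = Real.sqrt (1 - lam^2/6) := by
        refine quint_sqinj hy.le (Real.sqrt_nonneg _) ?_
        rw [hy2, Real.sq_sqrt (by linarith)]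
      exact ⟨Prod.ext_iff.mpr ⟨hx, hyeq⟩, hlt⟩
  · rintro (h | ⟨h, hlt⟩)
    · rw [Prod.ext_iff] at h
      obtain ⟨hx, hyv⟩ := h
      simp only at hx hyv
      subst hx; subst hyv
      exact ⟨quint_q4x_B w lam hlam.ne' hw1 hw2, quint_q4y_B w lam hlam.ne' hw1 hw2⟩
    · rw [Prod.ext_iff] at h
      obtain ⟨hx, hyv⟩ := h
      simp only at hx hyv
      subst hx; subst hyv
      exact ⟨quint_q4x_C w lam hlam.ne' hlt.le, quint_q4y_C w lam hlam.ne' hlt.le⟩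

/-- Critical points of the quintessence system with exponential potential: on `y = 0` exactly
`O, A₊, A₋`; for `y > 0` exactly `B` together with `C` when `λ² < 6`; `B = C` iff
`λ² = 3(1+w)`; at `B` one has `Ω_φ = 3(1+w)/λ²`, `w_φ = w`, `w_eff = w`, and at `C`
one has `Ω_φ = 1`, `w_eff = λ²/3 - 1`. -/
theorem quintessence_critical_points (w lam : ℝ) (hlam : 0 < lam) (hw1 : -1 < w) (hw2 : w < 1) :
    ({p : ℝ × ℝ | p.2 = 0 ∧ q4x w lam p.1 p.2 = 0 ∧ q4y w lam p.1 p.2 = 0}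
        = {(0, 0), (1, 0), (-1, 0)}) ∧
    (lam ^ 2 < 6 →
      {p : ℝ × ℝ | 0 < p.2 ∧ q4x w lam p.1 p.2 = 0 ∧ q4y w lam p.1 p.2 = 0}
        = {B4 w lam, C4 lam}) ∧
    (6 ≤ lam ^ 2 →
      {p : ℝ × ℝ | 0 < p.2 ∧ q4x w lam p.1 p.2 = 0 ∧ q4y w lam p.1 p.2 = 0} = {B4 w lam}) ∧
    (B4 w lam = C4 lam ↔ lam ^ 2 = 3 * (1 + w)) ∧
    ((B4 w lam).1 ^ 2 + (B4 w lam).2 ^ 2 = 3 * (1 + w) / lam ^ 2) ∧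
    (((B4 w lam).1 ^ 2 - (B4 w lam).2 ^ 2) / ((B4 w lam).1 ^ 2 + (B4 w lam).2 ^ 2) = w) ∧
    ((B4 w lam).1 ^ 2 - (B4 w lam).2 ^ 2 + w * (1 - (B4 w lam).1 ^ 2 - (B4 w lam).2 ^ 2) = w) ∧
    (lam ^ 2 < 6 →
      (C4 lam).1 ^ 2 + (C4 lam).2 ^ 2 = 1 ∧
      (C4 lam).1 ^ 2 - (C4 lam).2 ^ 2 + w * (1 - (C4 lam).1 ^ 2 - (C4 lam).2 ^ 2)
        = lam ^ 2 / 3 - 1) := by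
  have ht2 : Real.sqrt (3/2) ^ 2 = 3/2 := Real.sq_sqrt (by norm_num)
  have hu2 : Real.sqrt 6 ^ 2 = 6 := Real.sq_sqrt (by norm_num)
  have hu0 : Real.sqrt 6 ≠ 0 := by positivity
  have h1w : (1:ℝ) + w ≠ 0 := by linarith
  have hxB2 : (B4 w lam).1 ^ 2 = 3/2*(1+w)^2/lam^2 := by
    simp only [B4]
    rw [div_pow, mul_pow, ht2]
  have hyB2 : (B4 w lam).2 ^ 2 = 3*(1-w^2)/(2*lam^2) := quint_yB_sq w lam hlam.ne' hw1 hw2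
  have hyBpos : 0 < (B4 w lam).2 := by
    simp only [B4]
    have : (0:ℝ) < 3 * (1 - w^2) := by nlinarith
    positivity
  have hxC2 : (C4 lam).1 ^ 2 = lam^2/6 := by
    simp only [C4]
    rw [div_pow, hu2]
  refine ⟨?_, ?_, ?_, ?_, ?_, ?_, ?_, ?_⟩
  · -- zeros with y = 0
    ext ⟨x, y⟩
    simp only [Set.mem_setOf_eq, Set.mem_insert_iff, Set.mem_singleton_iff, Prod.mk.injEq]
    constructor
    · rintro ⟨rfl, h1, h2⟩
      have hfac : q4x w lam x 0 = -(3/2) * ((1 - w) * (x * ((1 - x) * (1 + x)))) := by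
        simp only [q4x]; ring
      rw [hfac] at h1
      have h3 : (1 - w) * (x * ((1 - x) * (1 + x))) = 0 := by
        rcases mul_eq_zero.mp h1 with h | h
        · norm_num at h
        · exact h
      have h4 : x * ((1 - x) * (1 + x)) = 0 := by
        rcases mul_eq_zero.mp h3 with h | h
        · exfalso; linarith
        · exact h
      rcases mul_eq_zero.mp h4 with h | h
      · exact Or.inl ⟨h, rfl⟩
      · rcases mul_eq_zero.mp h with h | h
        · exact Or.inr (Or.inl ⟨by linarith, rfl⟩)
        · exact Or.inr (Or.inr ⟨by linarith, rfl⟩)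
    · rintro (⟨rfl, rfl⟩ | ⟨rfl, rfl⟩ | ⟨rfl, rfl⟩) <;>
        refine ⟨rfl, ?_, ?_⟩ <;> simp [q4x, q4y] <;> ring
  · -- zeros with y > 0, lam^2 < 6
    intro hlt
    ext ⟨x, y⟩
    simp only [Set.mem_setOf_eq, Set.mem_insert_iff, Set.mem_singleton_iff]
    constructor
    · rintro ⟨hy, h1, h2⟩
      exact ((quint_char w lam hlam hw1 hw2 x y hy).mp ⟨h1, h2⟩).imp id And.left
    · rintro (h | h)
      · have hy : 0 < y := by
          have := congrArg Prod.snd h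
          simp only at this
          rw [this]; exact hyBpos
        obtain ⟨e1, e2⟩ := (quint_char w lam hlam hw1 hw2 x y hy).mpr (Or.inl h)
        exact ⟨hy, e1, e2⟩
      · have hy : 0 < y := by
          have := congrArg Prod.snd h
          simp only [C4] at this
          rw [this]
          exact Real.sqrt_pos.mpr (by linarith)
        obtain ⟨e1, e2⟩ := (quint_char w lam hlam hw1 hw2 x y hy).mpr (Or.inr ⟨h, hlt⟩)
        exact ⟨hy, e1, e2⟩
  · -- zeros with y > 0, 6 ≤ lam^2
    intro hge
    ext ⟨x, y⟩
    simp only [Set.mem_setOf_eq, Set.mem_singleton_iff]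
    constructor
    · rintro ⟨hy, h1, h2⟩
      rcases (quint_char w lam hlam hw1 hw2 x y hy).mp ⟨h1, h2⟩ with h | ⟨_, hlt⟩
      · exact h
      · linarith
    · intro h
      have hy : 0 < y := by
        have := congrArg Prod.snd h
        simp only at this
        rw [this]; exact hyBpos
      obtain ⟨e1, e2⟩ := (quint_char w lam hlam hw1 hw2 x y hy).mpr (Or.inl h)
      exact ⟨hy, e1, e2⟩
  · -- B = C iff lam^2 = 3(1+w)
    constructor
    · intro h
      have h1 := congrArg Prod.fst h
      simp only [B4, C4] at h1
      rw [div_eq_div_iff hlam.ne' hu0] at h1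
      linear_combination -h1 + (1+w)*quint_htu
    · intro hL
      have hc1 : (B4 w lam).1 = (C4 lam).1 := by
        simp only [B4, C4]
        rw [div_eq_div_iff hlam.ne' hu0]
        linear_combination (1+w)*quint_htu - hL
      have hc2 : (B4 w lam).2 = (C4 lam).2 := by
        refine quint_sqinj (le_of_lt hyBpos) ?_ ?_
        · simp only [C4]; exact Real.sqrt_nonneg _
        · have hlt : lam^2 < 6 := by nlinarith
          have hyC2 : (C4 lam).2 ^ 2 = 1 - lam^2/6 := by
            simp only [C4]
            exact Real.sq_sqrt (by linarith)
          rw [hyB2, hyC2, div_eq_iff (by positivity : (2:ℝ)*lam^2 ≠ 0)]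
          linear_combination ((1/3)*lam^2 + w - 1)*hL
      exact Prod.ext_iff.mpr ⟨hc1, hc2⟩
  · -- Omega_phi at B
    rw [hxB2, hyB2]
    field_simp
    ring
  · -- w_phi at B
    rw [hxB2, hyB2]
    rw [div_eq_iff (by
      intro h
      apply h1w
      have : 3/2*(1+w)^2/lam^2 + 3*(1-w^2)/(2*lam^2) = 3*(1+w)/lam^2 := by field_simp; ring
      rw [this] at h
      have := (div_eq_zero_iff.mp h).resolve_right (by positivity)
      linarith)]
    field_simp
    ring
  · -- w_eff at B
    rw [hxB2, hyB2]
    field_simp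
    ring
  · -- facts at C
    intro hlt
    have hyC2 : (C4 lam).2 ^ 2 = 1 - lam^2/6 := by
      simp only [C4]
      exact Real.sq_sqrt (by linarith)
    rw [hxC2, hyC2]
    constructor <;> ring
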